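/- Let d, k ≥ 2 be integers and J a graph. Suppose J has a k-regular proper blow-up F on 3k-1 vertices, and H is a proper blow-up of J on n vertices satisfying δ(H) > (d+1)n/(3d+2) and Δ(H) < (d-1)n/(3d-4). Then k = d. -/

import Mathlib

open Finset

/-- The blow-up of a graph `F` with class sizes given by `w`. -/
def SimpleGraph.blowup {α : Type*} (F : SimpleGraph α) (w : α → ℕ) :
    SimpleGraph (Σ a, Fin (w a)) where
  Adj x y := F.Adj x.1 y.1
  symm := ⟨fun _ _ h => F.symm.symm _ _ h⟩
  loopless := ⟨fun x h => F.loopless.irrefl x.1 h⟩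

open scoped Classical in
lemma blowup_degree {α : Type*} [Fintype α] (J : SimpleGraph α)
    (w : α → ℕ) (x : Σ a, Fin (w a)) :
    (J.blowup w).degree x = ∑ b ∈ Finset.univ.filter (J.Adj x.1), w b := by
  classical
  rw [SimpleGraph.degree, SimpleGraph.neighborFinset_eq_filter, Finset.card_filter,
    ← Finset.univ_sigma_univ, Finset.sum_sigma]
  simp [SimpleGraph.blowup, Finset.sum_ite_mem, Finset.sum_filter, apply_ite Finset.card]
  refine Finset.sum_congr rfl fun a _ => ?_
  by_cases h : J.Adj x.fst a <;> simp [h]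

open scoped Classical in
/-- If `J` has a `k`-regular proper blow-up `F` on `3k-1` vertices, `d, k ≥ 2`, and
`H` is a proper blow-up of `J` on `n` vertices with
`δ(H) > (d+1)n/(3d+2)` and `Δ(H) < (d-1)n/(3d-4)`, then `k = d`. -/
theorem stmt_2 {α : Type*} [Fintype α] (J : SimpleGraph α) (d k : ℕ)
    (hd : 2 ≤ d) (hk : 2 ≤ k)
    (u : α → ℕ) (hu : ∀ a, 0 < u a)
    (hFreg : (J.blowup u).IsRegularOfDegree k)
    (hFcard : ∑ a, u a = 3 * k - 1)
    (w : α → ℕ) (hw : ∀ a, 0 < w a)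
    (n : ℕ) (hn : n = ∑ a, w a)
    (hmin : (d + 1) * n < (3 * d + 2) * (J.blowup w).minDegree)
    (hmax : (3 * d - 4) * (J.blowup w).maxDegree < (d - 1) * n) :
    k = d := by
  classical
  have hα : Nonempty α := by
    by_contra h
    rw [not_nonempty_iff] at h
    simp [Finset.univ_eq_empty] at hFcard
    omega
  set S : α → ℕ := fun a => ∑ b ∈ Finset.univ.filter (J.Adj a), w b with hS
  have hs : ∀ a : α, ∑ b ∈ Finset.univ.filter (J.Adj a), u b = k := by
    intro a
    have := hFreg ⟨a, ⟨0, hu a⟩⟩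
    rwa [blowup_degree] at this
  have hSsum : ∑ a, u a * S a = k * n := by
    calc ∑ a, u a * S a
        = ∑ a, ∑ b, if J.Adj a b then u a * w b else 0 := by
          simp [hS, Finset.mul_sum, Finset.sum_filter, mul_ite]
      _ = ∑ b, ∑ a, if J.Adj a b then u a * w b else 0 := Finset.sum_comm
      _ = ∑ b, (∑ a ∈ Finset.univ.filter (J.Adj b), u a) * w b := by
          refine Finset.sum_congr rfl fun b _ => ?_
          rw [Finset.sum_mul, Finset.sum_filter]
          refine Finset.sum_congr rfl fun a _ => ?_
          rw [J.adj_comm]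
      _ = k * n := by
          simp only [hs, hn, Finset.mul_sum]
  have hδ : ∀ a, (J.blowup w).minDegree ≤ S a := by
    intro a
    have := SimpleGraph.minDegree_le_degree (J.blowup w) ⟨a, ⟨0, hw a⟩⟩
    rwa [blowup_degree] at this
  have hΔ : ∀ a, S a ≤ (J.blowup w).maxDegree := by
    intro a
    have := SimpleGraph.degree_le_maxDegree (J.blowup w) ⟨a, ⟨0, hw a⟩⟩
    rwa [blowup_degree] at this
  have h1 : (3 * k - 1) * (J.blowup w).minDegree ≤ k * n := by
    calc (3 * k - 1) * (J.blowup w).minDegree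
        = ∑ a, u a * (J.blowup w).minDegree := by rw [← Finset.sum_mul, hFcard]
      _ ≤ ∑ a, u a * S a := Finset.sum_le_sum fun a _ => Nat.mul_le_mul_left _ (hδ a)
      _ = k * n := hSsum
  have h2 : k * n ≤ (3 * k - 1) * (J.blowup w).maxDegree := by
    calc k * n = ∑ a, u a * S a := hSsum.symm
      _ ≤ ∑ a, u a * (J.blowup w).maxDegree :=
          Finset.sum_le_sum fun a _ => Nat.mul_le_mul_left _ (hΔ a)
      _ = (3 * k - 1) * (J.blowup w).maxDegree := by rw [← Finset.sum_mul, hFcard]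
  have hn0 : 0 < n := by
    rw [hn]
    exact Finset.sum_pos (fun i _ => hw i) Finset.univ_nonempty
  -- k ≤ d
  have hkd : k ≤ d := by
    have ha : (d + 1) * n * (3 * k - 1) < (3 * d + 2) * k * n := by
      calc (d + 1) * n * (3 * k - 1) < (3 * d + 2) * (J.blowup w).minDegree * (3 * k - 1) := by
            exact (Nat.mul_lt_mul_right (show 0 < 3 * k - 1 by omega)).mpr hmin
        _ = (3 * d + 2) * ((3 * k - 1) * (J.blowup w).minDegree) := by ring
        _ ≤ (3 * d + 2) * (k * n) := Nat.mul_le_mul_left _ h1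
        _ = (3 * d + 2) * k * n := by ring
    have hb : (d + 1) * (3 * k - 1) < (3 * d + 2) * k := by
      have : (d + 1) * (3 * k - 1) * n < (3 * d + 2) * k * n := by
        calc (d + 1) * (3 * k - 1) * n = (d + 1) * n * (3 * k - 1) := by ring
          _ < (3 * d + 2) * k * n := ha
      exact Nat.lt_of_mul_lt_mul_right this
    zify [show (1:ℕ) ≤ 3 * k by omega] at hb
    nlinarith
  -- d ≤ k
  have hdk : d ≤ k := by
    have ha : (3 * d - 4) * k * n < (d - 1) * n * (3 * k - 1) := by
      calc (3 * d - 4) * k * n = (3 * d - 4) * (k * n) := by ring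
        _ ≤ (3 * d - 4) * ((3 * k - 1) * (J.blowup w).maxDegree) := Nat.mul_le_mul_left _ h2
        _ = (3 * k - 1) * ((3 * d - 4) * (J.blowup w).maxDegree) := by ring
        _ < (3 * k - 1) * ((d - 1) * n) :=
            (Nat.mul_lt_mul_left (show 0 < 3 * k - 1 by omega)).mpr hmax
        _ = (d - 1) * n * (3 * k - 1) := by ring
    have hb : (3 * d - 4) * k < (d - 1) * (3 * k - 1) := by
      have : (3 * d - 4) * k * n < (d - 1) * (3 * k - 1) * n := by
        calc (3 * d - 4) * k * n < (d - 1) * n * (3 * k - 1) := ha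
          _ = (d - 1) * (3 * k - 1) * n := by ring
      exact Nat.lt_of_mul_lt_mul_right this
    zify [show (1:ℕ) ≤ 3 * k by omega, show (4:ℕ) ≤ 3 * d by omega,
      show (1:ℕ) ≤ d by omega] at hb
    nlinarith
  omega
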